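/- arXiv:1511.05882 — 3 statements merged into one kernel-verified Lean document; each statement's English description precedes it below -/
import Mathlib

section
/- For any ω-bouquet T, generated by a countable converse well-founded tree (T, R), whose root r has rank Θ, there exists a surjective d-map f : ([0, e(Θ)], I_1) → T with f(e(Θ)) = r, where e(Θ) = -1 + ω^Θ and I_1 is the interval topology. -/
open Ordinal Set

noncomputable section

universe u

/-! ## Basic topological notions (explicit topologies) -/

/-- The derived set (set of limit points) of `A` w.r.t. the topology `t`. -/
def dSet {X : Type u} (t : TopologicalSpace X) (A : Set X) : Set X :=
  {x | ∀ U : Set X, t.IsOpen U → x ∈ U → ∃ y, y ∈ U ∩ A ∧ y ≠ x}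

/-- Transfinite iterates of the derived-set operator, starting from the whole space. -/
def dIter {X : Type u} (t : TopologicalSpace X) (o : Ordinal.{u}) : Set X :=
  Ordinal.limitRecOn o Set.univ (fun _ ih => dSet t ih)
    (fun o _ ih => ⋂ (o' : Ordinal.{u}) (h : o' < o), ih o' h)

/-- The Cantor–Bendixson rank of a point: the least `ξ` with `x ∉ d^{ξ+1} X`. -/
def ptRank {X : Type u} (t : TopologicalSpace X) (x : X) : Ordinal.{u} :=
  sInf {ξ : Ordinal.{u} | x ∉ dIter t (ξ + 1)}

/-- The rank of a space: `sup_{x ∈ X} (ρ(x) + 1)`. -/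
def spRank (X : Type u) (t : TopologicalSpace X) : Ordinal.{u} :=
  ⨆ x : X, ptRank t x + 1

/-- A space is scattered if every nonempty subset has an isolated point. -/
def IsScattered {X : Type u} (t : TopologicalSpace X) : Prop :=
  ∀ A : Set X, A.Nonempty → ∃ x ∈ A, ∃ U : Set X, t.IsOpen U ∧ U ∩ A = {x}

/-- A `d`-map: continuous, open and pointwise discrete. -/
def IsDMap {X : Type u} {Y : Type*} (t : TopologicalSpace X) (s : TopologicalSpace Y)
    (f : X → Y) : Prop :=
  @Continuous _ _ t s f ∧ @IsOpenMap _ _ t s f ∧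
    ∀ y : Y, ∀ x : X, f x = y →
      ∃ U : Set X, t.IsOpen U ∧ x ∈ U ∧ ∀ z ∈ U, f z = y → z = x

/-! ## Hyperexponentials and hyperlogarithms -/

/-- The exponential `e ξ = -1 + ω^ξ`. -/
def eFun (x : Ordinal.{u}) : Ordinal.{u} := ω ^ x - 1

/-- `E` is the family of hyperexponentials: a family of normal functions with `E 1 = e`,
`E (α+β) = E α ∘ E β`, pointwise minimal among all such families. -/
def IsHyperexpFamily (E : Ordinal.{u} → Ordinal.{u} → Ordinal.{u}) : Prop :=
  (∀ a, Order.IsNormal (E a)) ∧ E 1 = eFun ∧ (∀ a b, E (a + b) = E a ∘ E b) ∧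
    ∀ F : Ordinal.{u} → Ordinal.{u} → Ordinal.{u},
      (∀ a, Order.IsNormal (F a)) → F 1 = eFun → (∀ a b, F (a + b) = F a ∘ F b) →
        ∀ a b, E a b ≤ F a b

/-- The end logarithm: `ℓ 0 = 0` and `ℓ ξ` is the unique `β` with `ξ = α + ω^β`. -/
def ellFun (x : Ordinal.{u}) : Ordinal.{u} :=
  if x = 0 then 0 else sInf {b : Ordinal.{u} | ∃ a, x = a + ω ^ b}

/-- An initial function maps initial segments onto initial segments. -/
def IsInitialFun (f : Ordinal.{u} → Ordinal.{u}) : Prop :=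
  ∀ o : Ordinal.{u}, ∃ o' : Ordinal.{u}, f '' Set.Iio o = Set.Iio o'

/-- `L` is the family of hyperlogarithms: a family of initial functions with `L 1 = ℓ`,
`L (α+β) = L β ∘ L α`, pointwise maximal among all such families. -/
def IsHyperlogFamily (L : Ordinal.{u} → Ordinal.{u} → Ordinal.{u}) : Prop :=
  (∀ a, IsInitialFun (L a)) ∧ L 1 = ellFun ∧ (∀ a b, L (a + b) = L b ∘ L a) ∧
    ∀ M : Ordinal.{u} → Ordinal.{u} → Ordinal.{u},
      (∀ a, IsInitialFun (M a)) → M 1 = ellFun → (∀ a b, M (a + b) = M b ∘ M a) →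
        ∀ a b, M a b ≤ L a b

/-! ## Icard topologies -/

/-- The generalized Icard topology `τ_λ` based on a space `(X, t)`, relative to a family `L`
of hyperlogarithms: the least topology containing `t` and all sets
`(α, β]_ξ = {x | α < ℓ^ξ ρ_t(x) ≤ β}` (including `α = -1`, i.e. `[0, β]_ξ`), for `ξ < λ`. -/
def IcardTop {X : Type u} (L : Ordinal.{u} → Ordinal.{u} → Ordinal.{u})
    (t : TopologicalSpace X) (lam : Ordinal.{u}) : TopologicalSpace X :=
  t ⊓ TopologicalSpace.generateFrom
    {S : Set X | ∃ ξ < lam,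
      (∃ b : Ordinal.{u}, S = {x | L ξ (ptRank t x) ≤ b}) ∨
      (∃ a b : Ordinal.{u}, a < b ∧ S = {x | a < L ξ (ptRank t x) ∧ L ξ (ptRank t x) ≤ b})}

/-! ## Ordinal spaces -/

/-- The ordinal corresponding to a point of `Θ.ToType`. -/
def ordVal {Θ : Ordinal.{u}} (x : Θ.ToType) : Ordinal.{u} :=
  @Ordinal.typein Θ.ToType (· < ·) isWellOrder_lt x

/-- The left topology `I₀` on (the canonical type of order type) `Θ`, generated by the
intervals `[0, β]`. -/
def leftTop (Θ : Ordinal.{u}) : TopologicalSpace Θ.ToType :=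
  TopologicalSpace.generateFrom {S : Set Θ.ToType | ∃ b : Θ.ToType, S = Set.Iic b}

/-- The interval topology `I₁` on `Θ`, generated by the sets `[0, β]` and `(α, β]`. -/
def intervalTop (Θ : Ordinal.{u}) : TopologicalSpace Θ.ToType :=
  TopologicalSpace.generateFrom
    {S : Set Θ.ToType | (∃ b, S = Set.Iic b) ∨ ∃ a b : Θ.ToType, S = Set.Ioc a b}

/-- The Icard topology `I_λ = (I₀)_λ` on the ordinal `Θ`: the least topology containing the
left topology and all sets `{x < Θ | α < ℓ^ξ x ≤ β}` for `ξ < λ`. -/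
def ordIcard (L : Ordinal.{u} → Ordinal.{u} → Ordinal.{u}) (Θ lam : Ordinal.{u}) :
    TopologicalSpace Θ.ToType :=
  leftTop Θ ⊓ TopologicalSpace.generateFrom
    {S : Set Θ.ToType | ∃ ξ < lam,
      (∃ b : Ordinal.{u}, S = {x | L ξ (ordVal x) ≤ b}) ∨
      (∃ a b : Ordinal.{u}, a < b ∧ S = {x | a < L ξ (ordVal x) ∧ L ξ (ordVal x) ≤ b})}

/-! ## Modal logic: GL and topological (d-)semantics -/

/-- Formulas of the basic modal language. -/
inductive Fml : Type
  | bot : Fml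
  | var : ℕ → Fml
  | imp : Fml → Fml → Fml
  | box : Fml → Fml

namespace Fml

/-- Negation. -/
def neg (p : Fml) : Fml := p.imp .bot

/-- Diamond. -/
def dia (p : Fml) : Fml := (p.neg.box).neg

end Fml

/-- The valuation determined by an assignment `V` of sets to propositional variables, in the
`d`-semantics: `⟦◇φ⟧ = d⟦φ⟧`, i.e. `⟦◻φ⟧` is the complement of the derived set of the
complement of `⟦φ⟧`. -/
def fval {X : Type u} (t : TopologicalSpace X) (V : ℕ → Set X) : Fml → Set X
  | .bot => ∅
  | .var n => V n
  | .imp p q => (fval t V p)ᶜ ∪ fval t V q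
  | .box p => (dSet t (fval t V p)ᶜ)ᶜ

/-- Classical tautologies (boxed formulas and variables treated as atoms). -/
def Tautology (φ : Fml) : Prop :=
  ∀ v : Fml → Bool, v .bot = false → (∀ p q : Fml, v (p.imp q) = (!(v p) || v q)) →
    v φ = true

/-- Provability in the Gödel–Löb provability logic `GL`. -/
inductive GLProv : Fml → Prop
  | taut {φ : Fml} : Tautology φ → GLProv φ
  | axK (p q : Fml) : GLProv (((p.imp q).box).imp ((p.box).imp q.box))
  | axLob (p : Fml) : GLProv ((((p.box).imp p).box).imp p.box)
  | mp {p q : Fml} : GLProv (p.imp q) → GLProv p → GLProv q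
  | nec {p : Fml} : GLProv p → GLProv p.box

/-- A set of formulas is GL-consistent if no finite conjunction of its members provably
implies `⊥`. -/
def GLConsistent (Γ : Set Fml) : Prop :=
  ¬ ∃ l : List Fml, (∀ φ ∈ l, φ ∈ Γ) ∧ GLProv (l.foldr .imp .bot)

/-- `Γ` is satisfied in the space `(X, t)`. -/
def SatisfiedIn {X : Type u} (t : TopologicalSpace X) (Γ : Set Fml) : Prop :=
  ∃ (V : ℕ → Set X) (x : X), ∀ φ ∈ Γ, x ∈ fval t V φ

/-- `GL` is strongly complete with respect to `(X, t)`. -/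
def StronglyCompleteFor {X : Type u} (t : TopologicalSpace X) : Prop :=
  ∀ Γ : Set Fml, GLConsistent Γ → SatisfiedIn t Γ

/-- Validity of a formula in a space under the `d`-semantics. -/
def ValidIn {X : Type u} (t : TopologicalSpace X) (φ : Fml) : Prop :=
  ∀ V : ℕ → Set X, fval t V φ = Set.univ

/-! ## Trees and ω-bouquets -/

/-- The upset topology of a relation: opens are the `R`-upward closed sets. -/
def upTop {T : Type u} (R : T → T → Prop) : TopologicalSpace T where
  IsOpen U := ∀ x ∈ U, ∀ y, R x y → y ∈ U
  isOpen_univ := fun x _ y _ => trivial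
  isOpen_inter := fun s t hs ht x hx y hR => ⟨hs x hx.1 y hR, ht x hx.2 y hR⟩
  isOpen_sUnion := fun S hS x hx y hR => by
    obtain ⟨s, hsS, hxs⟩ := hx
    exact ⟨s, hsS, hS s hsS x hxs y hR⟩

/-- A countable, converse well-founded tree. -/
structure IsOmegaTree {T : Type u} (R : T → T → Prop) : Prop where
  countable : Countable T
  trans : ∀ a b c, R a b → R b c → R a c
  irrefl : ∀ a, ¬ R a a
  predWellOrdered : ∀ t : T, IsWellOrder {s : T // R s t} (fun a b => R a.1 b.1)
  root : ∃! r : T, ∀ s : T, ¬ R s r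
  converseWellFounded : WellFounded (fun a b : T => R b a)

/-- The daughters (immediate successors) of a node. -/
def daughters {T : Type u} (R : T → T → Prop) (w : T) : Set T :=
  {v | R w v ∧ ¬ ∃ u, R w u ∧ R u v}

/-- The bouquet topology `σ_R`: the least topology extending the upset topology such that
whenever `w` has limit rank, `(v_i)` enumerates the daughters of `w` without repetition and
`n < ω`, the set `{w} ∪ ⋃_{i > n} ({v_i} ∪ R(v_i))` is open. -/
def sigmaTop {T : Type u} (R : T → T → Prop) : TopologicalSpace T :=
  upTop R ⊓ TopologicalSpace.generateFrom
    {S : Set T | ∃ w : T, Order.IsSuccLimit (ptRank (upTop R) w) ∧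
      ∃ v : ℕ → T, Function.Injective v ∧ Set.range v = daughters R w ∧
        ∃ n : ℕ, S = {w} ∪ ⋃ (i : ℕ) (_ : n < i), ({v i} ∪ {u | R (v i) u})}

/-! ## The club topology (via its neighborhood characterization) -/

/-- `C` is a club in (i.e. a closed unbounded subset of) the point `x`. -/
def IsClubIn {Θ : Ordinal.{u}} (C : Set Θ.ToType) (x : Θ.ToType) : Prop :=
  (∀ y ∈ C, y < x) ∧ (∀ z, z < x → ∃ y ∈ C, z < y) ∧
    ∀ z, z < x → (∃ w, w < z) → (∀ w, w < z → ∃ y ∈ C, w < y ∧ y < z) → z ∈ C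

/-- `t` is the club topology on `Θ`: a set `U` is a neighborhood of a point `x ∈ U` iff
`U` contains a club in `x` or `cf(x) < ℵ₁`. -/
def IsClubTop (Θ : Ordinal.{u}) (t : TopologicalSpace Θ.ToType) : Prop :=
  ∀ (U : Set Θ.ToType) (x : Θ.ToType), x ∈ U →
    (U ∈ @nhds _ t x ↔
      (Ordinal.cof (ordVal x) < Cardinal.aleph 1 ∨ ∃ C ⊆ U, IsClubIn C x))

/-! ## Auxiliary development -/

namespace OmegaBouquet

variable {T : Type u} {R : T → T → Prop}

/-- The strict upward cone. -/
def cone (R : T → T → Prop) (w : T) : Set T := {u | R w u}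

/-- The reflexive upward cone. -/
def coneS (R : T → T → Prop) (w : T) : Set T := insert w (cone R w)

lemma asymm_of (hT : IsOmegaTree R) {a b : T} (h : R a b) : ¬ R b a :=
  fun h' => hT.irrefl a (hT.trans a b a h h')

lemma isOpen_coneS (hT : IsOmegaTree R) (w : T) : (upTop R).IsOpen (coneS R w) := by
  intro x hx y hxy
  rcases hx with rfl | hx
  · exact Or.inr hxy
  · exact Or.inr (hT.trans _ _ _ hx hxy)

lemma coneS_subset (hT : IsOmegaTree R) {w v : T} (h : R w v) :
    coneS R v ⊆ coneS R w := by
  rintro u (rfl | hu)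
  · exact Or.inr h
  · exact Or.inr (hT.trans _ _ _ h hu)

/-- The rank function on the tree. -/
noncomputable def rho (hT : IsOmegaTree R) : T → Ordinal.{u} :=
  WellFounded.fix hT.converseWellFounded
    (fun w IH => ⨆ v : {v : T // R w v}, IH v.1 v.2 + 1)

lemma rho_eq (hT : IsOmegaTree R) (w : T) :
    rho hT w = ⨆ v : {v : T // R w v}, rho hT v.1 + 1 := by
  rw [rho, WellFounded.fix_eq]

lemma rho_lt (hT : IsOmegaTree R) {w v : T} (h : R w v) : rho hT v < rho hT w := by
  rw [rho_eq hT w]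
  have := le_ciSup (Ordinal.bddAbove_range fun v : {v : T // R w v} => rho hT v.1 + 1)
    (⟨v, h⟩ : {v : T // R w v})
  exact lt_of_lt_of_le (Order.lt_succ _) (by simpa [Order.succ_eq_add_one] using this)

lemma rho_le (hT : IsOmegaTree R) {w : T} {c : Ordinal.{u}}
    (h : ∀ v, R w v → rho hT v + 1 ≤ c) : rho hT w ≤ c := by
  rw [rho_eq hT w]
  exact Ordinal.iSup_le_iff.mpr fun v => h v.1 v.2

lemma add_one_le_iff' {a b : Ordinal.{u}} : a + 1 ≤ b ↔ a < b := by
  rw [Ordinal.add_one_eq_succ, Order.succ_le_iff]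

lemma lt_rho (hT : IsOmegaTree R) {w : T} {c : Ordinal.{u}} (h : c < rho hT w) :
    ∃ v, R w v ∧ c ≤ rho hT v := by
  by_contra hc
  push_neg at hc
  exact absurd (rho_le hT fun v hv => add_one_le_iff'.mpr (hc v hv)) (not_le.mpr h)

lemma rho_eq_zero (hT : IsOmegaTree R) {w : T} (h : rho hT w = 0) : ∀ v, ¬ R w v := by
  intro v hv
  have := rho_lt hT hv
  rw [h] at this
  exact absurd this (not_lt_zero)

/-- `dIter` unfolding lemmas. -/
lemma dIter_zero {X : Type u} (t : TopologicalSpace X) : dIter t 0 = Set.univ := by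
  rw [dIter, Ordinal.limitRecOn_zero]

lemma dIter_succ {X : Type u} (t : TopologicalSpace X) (o : Ordinal.{u}) :
    dIter t (o + 1) = dSet t (dIter t o) := by
  rw [dIter, Ordinal.add_one_eq_succ, Ordinal.limitRecOn_succ]; rfl

lemma dIter_limit {X : Type u} (t : TopologicalSpace X) {o : Ordinal.{u}} (ho : Order.IsSuccLimit o) :
    dIter t o = ⋂ (o' : Ordinal.{u}) (_ : o' < o), dIter t o' := by
  rw [dIter, Ordinal.limitRecOn_limit _ _ _ _ ho]; rfl

lemma mem_dSet_upTop (hT : IsOmegaTree R) {A : Set T} {x : T} :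
    x ∈ dSet (upTop R) A ↔ ∃ y, R x y ∧ y ∈ A := by
  constructor
  · intro h
    obtain ⟨y, ⟨hyU, hyA⟩, hyx⟩ := h (coneS R x) (isOpen_coneS hT x) (Or.inl rfl)
    rcases hyU with rfl | hy
    · exact absurd rfl hyx
    · exact ⟨y, hy, hyA⟩
  · rintro ⟨y, hxy, hyA⟩ U hU hxU
    exact ⟨y, ⟨hU x hxU y hxy, hyA⟩, fun h => hT.irrefl x (h ▸ hxy)⟩

lemma mem_dIter_iff (hT : IsOmegaTree R) (o : Ordinal.{u}) (x : T) :
    x ∈ dIter (upTop R) o ↔ o ≤ rho hT x := by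
  induction o using Ordinal.induction generalizing x with
  | _ o IH =>
    rcases Ordinal.zero_or_succ_or_isSuccLimit o with rfl | ⟨a, rfl⟩ | ho
    · simp [dIter_zero]
    · rw [← Ordinal.add_one_eq_succ] at *
      rw [dIter_succ, mem_dSet_upTop hT]
      have ha : a < a + 1 := by rw [Ordinal.add_one_eq_succ]; exact Order.lt_succ a
      constructor
      · rintro ⟨y, hxy, hy⟩
        have hay : a ≤ rho hT y := (IH a ha y).mp hy
        calc a + 1 ≤ rho hT y + 1 := by simpa using hay
          _ ≤ rho hT x := add_one_le_iff'.mpr (rho_lt hT hxy)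
      · intro h
        obtain ⟨v, hv, hav⟩ := lt_rho hT (lt_of_lt_of_le ha h)
        exact ⟨v, hv, (IH a ha v).mpr hav⟩
    · rw [dIter_limit _ ho]
      constructor
      · intro h
        by_contra hc
        push_neg at hc
        have h1 : rho hT x + 1 < o := by
          rw [Ordinal.add_one_eq_succ]
          exact ho.succ_lt hc
        have := (IH _ h1 x).mp (Set.mem_iInter₂.mp h _ h1)
        simpa using this
      · intro h
        exact Set.mem_iInter₂.mpr fun o' ho' => (IH o' ho' x).mpr (le_of_lt (lt_of_lt_of_le ho' h))

lemma ptRank_eq_rho (hT : IsOmegaTree R) (x : T) : ptRank (upTop R) x = rho hT x := by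
  have : {ξ : Ordinal.{u} | x ∉ dIter (upTop R) (ξ + 1)} = Set.Ici (rho hT x) := by
    ext ξ
    simp only [Set.mem_setOf_eq, mem_dIter_iff hT, Set.mem_Ici, not_le, add_one_le_iff']
    exact not_lt
  rw [ptRank, this, csInf_Ici]


/-! ### Daughters and roots -/

lemma exists_daughter_le (hT : IsOmegaTree R) {w u : T} (h : R w u) :
    ∃ v ∈ daughters R w, u ∈ coneS R v := by
  haveI := hT.predWellOrdered u
  have wf : WellFounded (fun a b : {s : T // R s u} => R a.1 b.1) := IsWellFounded.wf
  by_cases hS : {s : {s : T // R s u} | R w s.1}.Nonempty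
  · refine ⟨(wf.min _ hS).1, ⟨wf.min_mem _ hS, ?_⟩, Or.inr (wf.min _ hS).2⟩
    rintro ⟨z, hwz, hzm⟩
    exact wf.not_lt_min _ (x := ⟨z, hT.trans _ _ _ hzm (wf.min _ hS).2⟩) hwz hzm
  · refine ⟨u, ⟨h, ?_⟩, Or.inl rfl⟩
    rintro ⟨z, hwz, hzu⟩
    exact hS ⟨⟨z, hzu⟩, hwz⟩

lemma daughter_R (hT : IsOmegaTree R) {w v : T} (h : v ∈ daughters R w) : R w v := h.1

lemma root_spec (hT : IsOmegaTree R) {r : T} (hr : ∀ s : T, ¬ R s r) {u : T} (h : u ≠ r) :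
    R r u := by
  obtain ⟨r', _, hu⟩ := hT.root
  have hrr' : r = r' := hu r hr
  subst hrr'
  haveI := hT.predWellOrdered u
  have wf : WellFounded (fun a b : {s : T // R s u} => R a.1 b.1) := IsWellFounded.wf
  by_cases hS : Nonempty {s : T // R s u}
  · have hS' : (Set.univ : Set {s : T // R s u}).Nonempty := ⟨Classical.choice hS, trivial⟩
    set m := wf.min _ hS' with hm
    have hmin : ∀ s : T, ¬ R s m.1 := by
      intro s hs
      exact wf.not_lt_min _ (x := ⟨s, hT.trans _ _ _ hs m.2⟩) (Set.mem_univ _) hs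
    have : m.1 = r := hu m.1 hmin
    exact this ▸ m.2
  · exact absurd (hu u fun s hs => hS ⟨⟨s, hs⟩⟩) h

lemma coneS_root (hT : IsOmegaTree R) {r : T} (hr : ∀ s : T, ¬ R s r) :
    coneS R r = Set.univ := by
  ext u
  simp only [Set.mem_univ, iff_true, coneS, cone]
  by_cases h : u = r
  · exact Or.inl h
  · exact Or.inr (root_spec hT hr h)

/-! ### Rank and daughters -/

lemma exists_daughter_rank_ge (hT : IsOmegaTree R) {w : T} {β : Ordinal.{u}}
    (h : β < rho hT w) : ∃ v ∈ daughters R w, β ≤ rho hT v := by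
  obtain ⟨u, hwu, hu⟩ := lt_rho hT h
  obtain ⟨v, hv, hle⟩ := exists_daughter_le hT hwu
  refine ⟨v, hv, hu.trans ?_⟩
  rcases hle with rfl | hle
  · exact le_refl _
  · exact (rho_lt hT hle).le

lemma daughters_nonempty (hT : IsOmegaTree R) {w : T} (h : rho hT w ≠ 0) :
    (daughters R w).Nonempty := by
  obtain ⟨v, hv, _⟩ := exists_daughter_rank_ge hT (pos_iff_ne_zero.mpr h)
  exact ⟨v, hv⟩

lemma exists_daughter_rank_eq (hT : IsOmegaTree R) {w : T} {η : Ordinal.{u}}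
    (h : rho hT w = η + 1) : ∃ v ∈ daughters R w, rho hT v = η := by
  obtain ⟨v, hv, hle⟩ := exists_daughter_rank_ge hT (show η < rho hT w by
    rw [h, Ordinal.add_one_eq_succ]; exact Order.lt_succ η)
  refine ⟨v, hv, le_antisymm ?_ hle⟩
  have := rho_lt hT (daughter_R hT hv)
  rw [h] at this
  rw [Ordinal.add_one_eq_succ] at this
  exact Order.lt_succ_iff.mp this

lemma daughters_infinite (hT : IsOmegaTree R) {w : T} (h : Order.IsSuccLimit (rho hT w)) :
    (daughters R w).Infinite := by
  by_contra h'
  rw [Set.not_infinite] at h'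
  have hne : (daughters R w).Nonempty := daughters_nonempty hT h.pos.ne'
  obtain ⟨v, hv, hmax⟩ := Set.Finite.exists_maximalFor (rho hT) _ h' hne
  have h1 : rho hT v + 1 < rho hT w := by
    rw [Ordinal.add_one_eq_succ]
    exact h.succ_lt (rho_lt hT (daughter_R hT hv))
  obtain ⟨v', hv', hge⟩ := exists_daughter_rank_ge hT h1
  have : rho hT v ≤ rho hT v' := le_trans (by
    rw [Ordinal.add_one_eq_succ]; exact (Order.le_succ _)) hge
  have heq := le_antisymm this (hmax hv' this)
  rw [← heq] at hge
  have : rho hT v < rho hT v + 1 := by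
    rw [Ordinal.add_one_eq_succ]; exact Order.lt_succ _
  exact absurd hge (not_le.mpr this)

/-! ### eFun arithmetic -/

lemma eFun_zero' : eFun (0 : Ordinal.{u}) = 0 := by
  simp [eFun, Ordinal.opow_zero, Ordinal.sub_self]

lemma eFun_of_ne_zero {x : Ordinal.{u}} (h : x ≠ 0) : eFun x = ω ^ x := by
  have h1 : (1 : Ordinal.{u}) ≤ ω ^ x := Ordinal.one_le_iff_ne_zero.mpr (Ordinal.opow_ne_zero x Ordinal.omega0_ne_zero)
  have hω : ω ≤ ω ^ x := by
    calc (ω : Ordinal.{u}) = ω ^ (1 : Ordinal.{u}) := (Ordinal.opow_one ω).symm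
    _ ≤ ω ^ x := Ordinal.opow_le_opow_right Ordinal.omega0_pos (Ordinal.one_le_iff_ne_zero.mpr h)
  have key : 1 + (ω ^ x - 1) = ω ^ x := Ordinal.add_sub_cancel_of_le h1
  have key2 : 1 + ω ^ x = ω ^ x := Ordinal.one_add_of_omega0_le hω
  have := key.trans key2.symm
  exact (add_right_inj 1).mp this

lemma eFun_le_opow (x : Ordinal.{u}) : eFun x ≤ ω ^ x := by
  rcases eq_or_ne x 0 with rfl | h
  · rw [eFun_zero']; exact zero_le
  · rw [eFun_of_ne_zero h]

lemma one_lt_opow {θ : Ordinal.{u}} (h : θ ≠ 0) : 1 < ω ^ θ := by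
  calc (1 : Ordinal.{u}) < ω := Ordinal.one_lt_omega0
  _ = ω ^ (1 : Ordinal.{u}) := (Ordinal.opow_one ω).symm
  _ ≤ ω ^ θ := Ordinal.opow_le_opow_right Ordinal.omega0_pos (Ordinal.one_le_iff_ne_zero.mpr h)

lemma eFun_add_one_lt {b θ : Ordinal.{u}} (h : b < θ) : eFun b + 1 < ω ^ θ := by
  have hθ : θ ≠ 0 := fun h0 => by simp [h0] at h
  refine Ordinal.principal_add_omega0_opow θ ?_ (one_lt_opow hθ)
  calc eFun b ≤ ω ^ b := eFun_le_opow b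
  _ < ω ^ θ := (Ordinal.opow_lt_opow_iff_right Ordinal.one_lt_omega0).mpr h

/-! ### Good sequences of daughters -/

/-- A good enumeration of the daughters of `w`. -/
def GoodSeq (hT : IsOmegaTree R) (w : T) (d : ℕ → T) : Prop :=
  (∀ j, d j ∈ daughters R w) ∧ (∀ v ∈ daughters R w, ∃ j, d j = v) ∧
    (Order.IsSuccLimit (rho hT w) → Function.Injective d ∧ Set.range d = daughters R w) ∧
    (¬ Order.IsSuccLimit (rho hT w) → ∀ v ∈ daughters R w, ∀ m : ℕ, ∃ j, m ≤ j ∧ d j = v)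

lemma exists_goodSeq (hT : IsOmegaTree R) {w : T} (h : rho hT w ≠ 0) :
    ∃ d : ℕ → T, GoodSeq hT w d := by
  haveI := hT.countable
  have hne : (daughters R w).Nonempty := daughters_nonempty hT h
  have hcnt : (daughters R w).Countable := Set.to_countable _
  by_cases hlim : Order.IsSuccLimit (rho hT w)
  · have hinf : (daughters R w).Infinite := daughters_infinite hT hlim
    haveI : Infinite (daughters R w) := hinf.to_subtype
    haveI : Encodable (daughters R w) := Encodable.ofCountable _
    haveI : Denumerable (daughters R w) := Denumerable.ofEncodableOfInfinite _
    set e := Denumerable.eqv (daughters R w) with he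
    refine ⟨fun n => (e.symm n).1, fun j => (e.symm j).2, fun v hv => ⟨e ⟨v, hv⟩, by simp⟩,
      fun _ => ⟨?_, ?_⟩, fun hnl => absurd hlim hnl⟩
    · intro a b hab
      have : e.symm a = e.symm b := Subtype.ext hab
      simpa using congrArg e this
    · ext v
      constructor
      · rintro ⟨n, rfl⟩; exact (e.symm n).2
      · intro hv; exact ⟨e ⟨v, hv⟩, by simp⟩
  · obtain ⟨g, hg⟩ := Countable.exists_surjective hne hcnt
    refine ⟨fun n => (g (Nat.unpair n).1).1, fun j => (g (Nat.unpair j).1).2,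
      fun v hv => ?_, fun hl => absurd hl hlim, fun _ v hv m => ?_⟩
    · obtain ⟨k, hk⟩ := hg ⟨v, hv⟩
      exact ⟨Nat.pair k 0, by simp [Nat.unpair_pair, hk]⟩
    · obtain ⟨k, hk⟩ := hg ⟨v, hv⟩
      exact ⟨Nat.pair k m, Nat.right_le_pair k m, by simp [Nat.unpair_pair, hk]⟩

lemma exists_goodSeq' (hT : IsOmegaTree R) (w : T) :
    ∃ d : ℕ → T, rho hT w ≠ 0 → GoodSeq hT w d := by
  by_cases h : rho hT w = 0
  · exact ⟨fun _ => w, fun h' => absurd h h'⟩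
  · obtain ⟨d, hd⟩ := exists_goodSeq hT h
    exact ⟨d, fun _ => hd⟩

/-- A chosen good enumeration. -/
noncomputable def dSeq (hT : IsOmegaTree R) (w : T) : ℕ → T :=
  (exists_goodSeq' hT w).choose

lemma dSeq_good (hT : IsOmegaTree R) {w : T} (h : rho hT w ≠ 0) :
    GoodSeq hT w (dSeq hT w) :=
  (exists_goodSeq' hT w).choose_spec h


/-! ### Block offsets -/

/-- Length of the `j`-th block below `w` (one more than the hyperexponential of the rank
of the `j`-th chosen daughter). -/
noncomputable def blkLen (hT : IsOmegaTree R) (w : T) (j : ℕ) : Ordinal.{u} :=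
  eFun (rho hT (dSeq hT w j)) + 1

/-- Starting offsets of the blocks below `w`. -/
noncomputable def off (hT : IsOmegaTree R) (w : T) : ℕ → Ordinal.{u}
  | 0 => 0
  | j + 1 => off hT w j + blkLen hT w j

lemma off_lt_succ (hT : IsOmegaTree R) (w : T) (j : ℕ) :
    off hT w j < off hT w (j + 1) := by
  rw [off]
  have : (0 : Ordinal.{u}) < blkLen hT w j := by
    rw [blkLen]
    exact lt_of_lt_of_le zero_lt_one (le_add_self)
  simpa using (add_lt_add_iff_left (off hT w j)).mpr this

lemma off_strictMono (hT : IsOmegaTree R) (w : T) : StrictMono (off hT w) :=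
  strictMono_nat_of_lt_succ (off_lt_succ hT w)

lemma off_shape (hT : IsOmegaTree R) (w : T) (j : ℕ) :
    off hT w j = 0 ∨ ∃ γ : Ordinal.{u}, off hT w j = γ + 1 := by
  cases j with
  | zero => exact Or.inl rfl
  | succ k =>
      refine Or.inr ⟨off hT w k + eFun (rho hT (dSeq hT w k)), ?_⟩
      rw [off, blkLen, ← add_assoc]

lemma off_lt_opow (hT : IsOmegaTree R) {w : T} (h : rho hT w ≠ 0) (j : ℕ) :
    off hT w j < ω ^ rho hT w := by
  induction j with
  | zero => exact Ordinal.opow_pos _ Ordinal.omega0_pos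
  | succ k IH =>
      rw [off]
      refine Ordinal.principal_add_omega0_opow _ IH ?_
      rw [blkLen]
      exact eFun_add_one_lt (rho_lt hT (daughter_R hT ((dSeq_good hT h).1 k)))

lemma opow_le_blkLen {η : Ordinal.{u}} : ω ^ η ≤ eFun η + 1 := by
  rcases eq_or_ne η 0 with rfl | h
  · simp [eFun_zero', Ordinal.opow_zero]
  · rw [eFun_of_ne_zero h]
    exact le_self_add

lemma off_unbounded (hT : IsOmegaTree R) {w : T} (h : rho hT w ≠ 0) {ξ : Ordinal.{u}}
    (hξ : ξ < ω ^ rho hT w) : ∃ j : ℕ, ξ < off hT w (j + 1) := by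
  rcases Ordinal.zero_or_succ_or_isSuccLimit (rho hT w) with h0 | ⟨η, hη⟩ | hlim
  · exact absurd h0 h
  · -- successor rank: daughters of rank η appear infinitely often
    rw [← Ordinal.add_one_eq_succ, eq_comm] at hη
    obtain ⟨v, hv, hvr⟩ := exists_daughter_rank_eq hT hη
    have hnl : ¬ Order.IsSuccLimit (rho hT w) := by
      rw [hη, Ordinal.add_one_eq_succ]; exact Order.not_isSuccLimit_succ η
    have hio := (dSeq_good hT h).2.2.2 hnl v hv
    have key : ∀ m : ℕ, ∃ j : ℕ, ω ^ η * m ≤ off hT w j := by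
      intro m
      induction m with
      | zero => exact ⟨0, by simp⟩
      | succ n IH =>
          obtain ⟨j, hj⟩ := IH
          obtain ⟨j', hjj', hj'⟩ := hio j
          refine ⟨j' + 1, ?_⟩
          rw [Nat.cast_succ, mul_add, mul_one, off, blkLen, hj', hvr]
          exact add_le_add (hj.trans (off_strictMono hT w |>.monotone hjj')) opow_le_blkLen
    have : ξ < ω ^ η * ω := by
      rw [hη, Ordinal.add_one_eq_succ, Ordinal.opow_succ] at hξ
      exact hξ
    obtain ⟨c', hc', hlt⟩ := (Ordinal.lt_mul_iff_of_isSuccLimit Ordinal.isSuccLimit_omega0).mp this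
    obtain ⟨n, rfl⟩ := Ordinal.lt_omega0.mp hc'
    obtain ⟨j, hj⟩ := key n
    cases j with
    | zero => exact ⟨0, lt_of_lt_of_le (lt_of_lt_of_le hlt hj) ((off_strictMono hT w).monotone (Nat.zero_le 1))⟩
    | succ k => exact ⟨k, lt_of_lt_of_le hlt hj⟩
  · -- limit rank
    obtain ⟨β, hβ, hlt⟩ := (Ordinal.lt_opow_of_isSuccLimit Ordinal.omega0_ne_zero hlim).mp hξ
    obtain ⟨v, hv, hle⟩ := exists_daughter_rank_ge hT hβ
    obtain ⟨j, hj⟩ := (dSeq_good hT h).2.1 v hv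
    refine ⟨j, ?_⟩
    calc ξ < ω ^ β := hlt
      _ ≤ ω ^ rho hT v := Ordinal.opow_le_opow_right Ordinal.omega0_pos hle
      _ ≤ blkLen hT w j := by rw [blkLen, hj]; exact opow_le_blkLen
      _ ≤ off hT w (j + 1) := by rw [off]; exact le_add_self

/-- The index of the block containing `ξ`. -/
noncomputable def blk (hT : IsOmegaTree R) (w : T) (ξ : Ordinal.{u}) : ℕ :=
  sInf {j : ℕ | ξ < off hT w (j + 1)}

lemma blk_lt (hT : IsOmegaTree R) {w : T} (h : rho hT w ≠ 0) {ξ : Ordinal.{u}}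
    (hξ : ξ < ω ^ rho hT w) : ξ < off hT w (blk hT w ξ + 1) :=
  Nat.sInf_mem (off_unbounded hT h hξ)

lemma off_blk_le (hT : IsOmegaTree R) {w : T} (h : rho hT w ≠ 0) {ξ : Ordinal.{u}}
    (hξ : ξ < ω ^ rho hT w) : off hT w (blk hT w ξ) ≤ ξ := by
  rcases Nat.eq_zero_or_pos (blk hT w ξ) with h0 | hpos
  · rw [h0]; exact zero_le
  · obtain ⟨k, hk⟩ := Nat.exists_eq_succ_of_ne_zero hpos.ne'
    have : k ∉ {j : ℕ | ξ < off hT w (j + 1)} := fun hm =>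
      absurd (Nat.sInf_le hm) (by rw [← blk] at *; omega)
    rw [hk]
    exact not_lt.mp this

lemma blk_eq (hT : IsOmegaTree R) {w : T} (j : ℕ) {ξ : Ordinal.{u}}
    (h1 : off hT w j ≤ ξ) (h2 : ξ < off hT w (j + 1)) : blk hT w ξ = j := by
  refine le_antisymm (Nat.sInf_le h2) ?_
  by_contra hc
  push_neg at hc
  have hmem : blk hT w ξ ∈ {j : ℕ | ξ < off hT w (j + 1)} := Nat.sInf_mem ⟨j, h2⟩
  have : off hT w (blk hT w ξ + 1) ≤ off hT w j := (off_strictMono hT w).monotone (by omega)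
  exact absurd (lt_of_lt_of_le hmem (this.trans h1)) (lt_irrefl ξ)

/-! ### The map `F` -/

/-- The d-map from the ordinal interval onto the subtree above `w`, in relative coordinates. -/
noncomputable def FF (hT : IsOmegaTree R) : T → Ordinal.{u} → T :=
  WellFounded.fix hT.converseWellFounded
    (fun w IH ξ =>
      if h : rho hT w = 0 ∨ ω ^ rho hT w ≤ ξ then w
      else IH (dSeq hT w (blk hT w ξ))
        (daughter_R hT ((dSeq_good hT (not_or.mp h).1).1 (blk hT w ξ)))
        (ξ - off hT w (blk hT w ξ)))

lemma FF_eq (hT : IsOmegaTree R) (w : T) (ξ : Ordinal.{u}) :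
    FF hT w ξ = if rho hT w = 0 ∨ ω ^ rho hT w ≤ ξ then w
      else FF hT (dSeq hT w (blk hT w ξ)) (ξ - off hT w (blk hT w ξ)) := by
  rw [FF, WellFounded.fix_eq]
  split_ifs with h
  · rfl
  · rfl

lemma FF_top (hT : IsOmegaTree R) (w : T) {ξ : Ordinal.{u}}
    (h : rho hT w = 0 ∨ ω ^ rho hT w ≤ ξ) : FF hT w ξ = w := by
  rw [FF_eq, if_pos h]

lemma FF_eFun (hT : IsOmegaTree R) (w : T) : FF hT w (eFun (rho hT w)) = w := by
  rcases eq_or_ne (rho hT w) 0 with h | h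
  · exact FF_top hT w (Or.inl h)
  · exact FF_top hT w (Or.inr (by rw [eFun_of_ne_zero h]))

lemma FF_block (hT : IsOmegaTree R) {w : T} (h : rho hT w ≠ 0) (j : ℕ) {δ : Ordinal.{u}}
    (hδ : δ ≤ eFun (rho hT (dSeq hT w j))) :
    FF hT w (off hT w j + δ) = FF hT (dSeq hT w j) δ := by
  have hlt : off hT w j + δ < off hT w (j + 1) := by
    rw [off, blkLen]
    refine (add_lt_add_iff_left _).mpr ?_
    rw [Ordinal.add_one_eq_succ]
    exact Order.lt_succ_iff.mpr hδ
  have hξ : off hT w j + δ < ω ^ rho hT w := lt_of_lt_of_le hlt (off_lt_opow hT h (j+1)).le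
  have hblk : blk hT w (off hT w j + δ) = j :=
    blk_eq hT j (le_self_add) hlt
  rw [FF_eq, if_neg (by push_neg; exact ⟨h, hξ⟩), hblk, Ordinal.add_sub_cancel]

lemma FF_mem_coneS (hT : IsOmegaTree R) (w : T) (ξ : Ordinal.{u}) :
    FF hT w ξ ∈ coneS R w := by
  induction w using WellFounded.induction hT.converseWellFounded generalizing ξ with
  | _ w IH =>
    rw [FF_eq]
    split_ifs with h
    · exact Or.inl rfl
    · have hv : R w (dSeq hT w (blk hT w ξ)) :=
        daughter_R hT ((dSeq_good hT (not_or.mp h).1).1 _)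
      exact coneS_subset hT hv (IH _ hv _)

lemma FF_ne (hT : IsOmegaTree R) {w : T} (h : rho hT w ≠ 0) {ξ : Ordinal.{u}}
    (hξ : ξ < ω ^ rho hT w) : FF hT w ξ ≠ w := by
  rw [FF_eq, if_neg (by push_neg; exact ⟨h, hξ⟩)]
  intro hc
  have hv : R w (dSeq hT w (blk hT w ξ)) :=
    daughter_R hT ((dSeq_good hT h).1 _)
  have := FF_mem_coneS hT (dSeq hT w (blk hT w ξ)) (ξ - off hT w (blk hT w ξ))
  rw [hc] at this
  rcases this with heq | hlt'
  · rw [← heq] at hv; exact hT.irrefl w hv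
  · exact asymm_of hT hv hlt'

lemma FF_surj (hT : IsOmegaTree R) (w : T) :
    ∀ u ∈ coneS R w, ∃ ξ ≤ eFun (rho hT w), FF hT w ξ = u := by
  induction w using WellFounded.induction hT.converseWellFounded with
  | _ w IH =>
    rintro u (rfl | hu)
    · exact ⟨eFun (rho hT u), le_refl _, FF_eFun hT u⟩
    · have h : rho hT w ≠ 0 := fun h0 => rho_eq_zero hT h0 u hu
      obtain ⟨v, hv, hle⟩ := exists_daughter_le hT hu
      obtain ⟨j, hj⟩ := (dSeq_good hT h).2.1 v hv
      obtain ⟨δ, hδ, hFF⟩ := IH v (daughter_R hT hv) u hle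
      refine ⟨off hT w j + δ, ?_, ?_⟩
      · have := FF_block hT h j (hj ▸ hδ)
        have hlt : off hT w j + δ < ω ^ rho hT w := by
          have h1 : off hT w j + δ < off hT w (j + 1) := by
            rw [off, blkLen, hj]
            refine (add_lt_add_iff_left _).mpr ?_
            rw [Ordinal.add_one_eq_succ]
            exact Order.lt_succ_iff.mpr hδ
          exact lt_of_lt_of_le h1 (off_lt_opow hT h (j+1)).le
        rw [eFun_of_ne_zero h]
        exact hlt.le
      · rw [FF_block hT h j (hj ▸ hδ), hj, hFF]

lemma FF_zero_rank (hT : IsOmegaTree R) (w : T) : rho hT (FF hT w 0) = 0 := by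
  induction w using WellFounded.induction hT.converseWellFounded with
  | _ w IH =>
    rw [FF_eq]
    split_ifs with h
    · rcases h with h | h
      · exact h
      · exact absurd h (not_le.mpr (Ordinal.opow_pos _ Ordinal.omega0_pos))
    · rw [Ordinal.zero_sub]
      exact IH _ (daughter_R hT ((dSeq_good hT (not_or.mp h).1).1 _))

lemma isOpen_singleton_of_rank_zero (hT : IsOmegaTree R) {u : T} (h : rho hT u = 0) :
    (upTop R).IsOpen {u} := by
  rintro x rfl y hy
  exact absurd hy (rho_eq_zero hT h y)

/-- Discreteness: to the left of `ξ` down to a successor (or zero) bound `c`, the value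
`FF hT w ξ` is not attained. -/
lemma FF_span (hT : IsOmegaTree R) (w : T) :
    ∀ ξ ≤ eFun (rho hT w), ∃ c, c ≤ ξ ∧ (c = 0 ∨ ∃ γ : Ordinal.{u}, c = γ + 1) ∧
      ∀ ζ, c ≤ ζ → ζ < ξ → FF hT w ζ ≠ FF hT w ξ := by
  induction w using WellFounded.induction hT.converseWellFounded with
  | _ w IH =>
    intro ξ hξ
    rcases eq_or_ne (rho hT w) 0 with h0 | h0
    · rw [h0, eFun_zero', nonpos_iff_eq_zero] at hξ
      subst hξ
      exact ⟨0, le_refl _, Or.inl rfl, fun ζ h1 h2 => absurd h2 (not_lt_zero)⟩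
    · rw [eFun_of_ne_zero h0] at hξ
      rcases eq_or_lt_of_le hξ with rfl | hlt
      · refine ⟨0, zero_le, Or.inl rfl, fun ζ _ h2 => ?_⟩
        rw [FF_top hT w (Or.inr (le_refl _))]
        exact FF_ne hT h0 h2
      · set j := blk hT w ξ with hj
        set v := dSeq hT w j with hv
        set δ := ξ - off hT w j with hδdef
        have hoff : off hT w j ≤ ξ := off_blk_le hT h0 hlt
        have hsum : off hT w j + δ = ξ := Ordinal.add_sub_cancel_of_le hoff
        have hδe : δ ≤ eFun (rho hT v) := by
          have h2 : ξ < off hT w (j + 1) := blk_lt hT h0 hlt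
          rw [off, blkLen] at h2
          have h3 : δ < eFun (rho hT v) + 1 :=
            Ordinal.sub_lt_of_lt_add h2 (lt_of_lt_of_le zero_lt_one (le_add_self))
          rw [Ordinal.add_one_eq_succ] at h3
          exact Order.lt_succ_iff.mp h3
        have hvd : R w v := daughter_R hT ((dSeq_good hT h0).1 j)
        obtain ⟨c', hc'δ, hc'shape, hc'⟩ := IH v hvd δ hδe
        refine ⟨off hT w j + c', by rw [← hsum]; exact (add_le_add_iff_left _).mpr hc'δ, ?_, ?_⟩
        · rcases hc'shape with rfl | ⟨γ, rfl⟩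
          · simpa using off_shape hT w j
          · exact Or.inr ⟨off hT w j + γ, by rw [← add_assoc]⟩
        · intro ζ h1 h2
          have hζoff : off hT w j ≤ ζ := le_trans (le_self_add) h1
          set δ' := ζ - off hT w j with hδ'def
          have hζsum : off hT w j + δ' = ζ := Ordinal.add_sub_cancel_of_le hζoff
          have hδ'δ : δ' < δ := by
            have := h2
            rw [← hζsum, ← hsum] at this
            exact (add_lt_add_iff_left _).mp this
          have hc'δ' : c' ≤ δ' := by
            rw [← hζsum] at h1
            exact (add_le_add_iff_left _).mp h1
          rw [← hζsum, ← hsum, FF_block hT h0 j (le_of_lt (lt_of_lt_of_le hδ'δ hδe)),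
            FF_block hT h0 j hδe]
          exact hc' δ' hc'δ' hδ'δ

/-! ### Topology helpers -/

/-- Generators of the bouquet refinement. -/
def sigmaGens (R : T → T → Prop) : Set (Set T) :=
  {S : Set T | ∃ w : T, Order.IsSuccLimit (ptRank (upTop R) w) ∧
    ∃ v : ℕ → T, Function.Injective v ∧ Set.range v = daughters R w ∧
      ∃ n : ℕ, S = {w} ∪ ⋃ (i : ℕ) (_ : n < i), ({v i} ∪ {u | R (v i) u})}

lemma sigmaTop_eq (R : T → T → Prop) :
    sigmaTop R = TopologicalSpace.generateFrom
      ({S : Set T | @IsOpen T (upTop R) S} ∪ sigmaGens R) := by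
  rw [sigmaTop, generateFrom_union, TopologicalSpace.generateFrom_setOf_isOpen]
  rfl

lemma isOpenS_of_upOpen {U : Set T} (h : (upTop R).IsOpen U) :
    (sigmaTop R).IsOpen U := by
  rw [sigmaTop_eq]
  exact TopologicalSpace.isOpen_generateFrom_of_mem (Or.inl h)

lemma isOpenS_of_gen {U : Set T} (h : U ∈ sigmaGens R) :
    (sigmaTop R).IsOpen U := by
  rw [sigmaTop_eq]
  exact TopologicalSpace.isOpen_generateFrom_of_mem (Or.inr h)

lemma isOpen_of_pointwise {X : Type u} (t : TopologicalSpace X) (O : Set X)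
    (h : ∀ x ∈ O, ∃ U, t.IsOpen U ∧ x ∈ U ∧ U ⊆ O) : t.IsOpen O := by
  have hO : O = ⋃₀ {U : Set X | t.IsOpen U ∧ U ⊆ O} := by
    apply subset_antisymm
    · intro x hx
      obtain ⟨U, h1, h2, h3⟩ := h x hx
      exact ⟨U, ⟨h1, h3⟩, h2⟩
    · rintro x ⟨U, ⟨_, h3⟩, hx⟩
      exact h3 hx
  rw [hO]
  exact t.isOpen_sUnion _ fun U hU => hU.1

/-- Basic sets of the interval topology. -/
def IntervalBasic {Θ' : Ordinal.{u}} (S : Set Θ'.ToType) : Prop :=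
  (∃ b, S = Set.Iic b) ∨ ∃ a b : Θ'.ToType, S = Set.Ioc a b

lemma intervalBasic_isOpen {Θ' : Ordinal.{u}} {S : Set Θ'.ToType} (h : IntervalBasic S) :
    (intervalTop Θ').IsOpen S :=
  TopologicalSpace.isOpen_generateFrom_of_mem h

lemma intervalBasic_inter {Θ' : Ordinal.{u}} {S S' : Set Θ'.ToType}
    (h : IntervalBasic S) (h' : IntervalBasic S') : IntervalBasic (S ∩ S') := by
  rcases h with ⟨b, rfl⟩ | ⟨a, b, rfl⟩ <;> rcases h' with ⟨b', rfl⟩ | ⟨a', b', rfl⟩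
  · exact Or.inl ⟨b ⊓ b', Set.Iic_inter_Iic⟩
  · exact Or.inr ⟨a', b' ⊓ b, by rw [Set.inter_comm, Set.Ioc_inter_Iic]⟩
  · exact Or.inr ⟨a, b ⊓ b', by rw [Set.Ioc_inter_Iic]⟩
  · exact Or.inr ⟨a ⊔ a', b ⊓ b', by rw [Set.Ioc_inter_Ioc]⟩

lemma intervalTop_pointwise {Θ' : Ordinal.{u}} (m : Θ'.ToType) (hm : ∀ y, y ≤ m)
    {O : Set Θ'.ToType} (hO : (intervalTop Θ').IsOpen O) :
    ∀ x ∈ O, ∃ B, IntervalBasic B ∧ x ∈ B ∧ B ⊆ O := by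
  have hO' : TopologicalSpace.GenerateOpen
      {S : Set Θ'.ToType | (∃ b, S = Set.Iic b) ∨ ∃ a b : Θ'.ToType, S = Set.Ioc a b} O := hO
  clear hO
  induction hO' with
  | basic S hS => exact fun x hx => ⟨S, hS, hx, le_refl _⟩
  | univ => exact fun x _ => ⟨Set.Iic m, Or.inl ⟨m, rfl⟩, hm x, Set.subset_univ _⟩
  | inter S1 S2 _ _ IH1 IH2 =>
      rintro x ⟨h1, h2⟩
      obtain ⟨B1, hB1, hx1, hs1⟩ := IH1 x h1
      obtain ⟨B2, hB2, hx2, hs2⟩ := IH2 x h2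
      exact ⟨B1 ∩ B2, intervalBasic_inter hB1 hB2, ⟨hx1, hx2⟩,
        Set.inter_subset_inter hs1 hs2⟩
  | sUnion S _ IH =>
      rintro x ⟨s, hs, hxs⟩
      obtain ⟨B, hB, hx, hsub⟩ := IH s hs x hxs
      exact ⟨B, hB, hx, hsub.trans (Set.subset_sUnion_of_mem hs)⟩

lemma blk_mono (hT : IsOmegaTree R) {w : T} (h : rho hT w ≠ 0) {ξ ζ : Ordinal.{u}}
    (hξζ : ξ ≤ ζ) (hζ : ζ < ω ^ rho hT w) : blk hT w ξ ≤ blk hT w ζ :=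
  Nat.sInf_le (lt_of_le_of_lt hξζ (blk_lt hT h hζ))

lemma FF_val (hT : IsOmegaTree R) {w : T} (h : rho hT w ≠ 0) {ζ : Ordinal.{u}}
    (hζ : ζ < ω ^ rho hT w) :
    FF hT w ζ = FF hT (dSeq hT w (blk hT w ζ)) (ζ - off hT w (blk hT w ζ)) := by
  rw [FF_eq, if_neg (by push_neg; exact ⟨h, hζ⟩)]

lemma sub_le_blkLen (hT : IsOmegaTree R) {w : T} (h : rho hT w ≠ 0) {ζ : Ordinal.{u}}
    (hζ : ζ < ω ^ rho hT w) :
    ζ - off hT w (blk hT w ζ) ≤ eFun (rho hT (dSeq hT w (blk hT w ζ))) := by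
  have h2 : ζ < off hT w (blk hT w ζ + 1) := blk_lt hT h hζ
  rw [off, blkLen] at h2
  have h3 := Ordinal.sub_lt_of_lt_add h2
    (lt_of_lt_of_le zero_lt_one (le_add_self))
  rw [Ordinal.add_one_eq_succ] at h3
  exact Order.lt_succ_iff.mp h3

/-- Translation of an interval inside a single block. -/
lemma FF_image_block (hT : IsOmegaTree R) {w : T} (h : rho hT w ≠ 0) (j : ℕ)
    {δ : Ordinal.{u}} (hδ : δ ≤ eFun (rho hT (dSeq hT w j))) {a : Ordinal.{u}}
    (ha : off hT w j ≤ a) :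
    FF hT w '' Set.Ioc a (off hT w j + δ) =
      FF hT (dSeq hT w j) '' Set.Ioc (a - off hT w j) δ := by
  ext u
  constructor
  · rintro ⟨ζ, ⟨h1, h2⟩, rfl⟩
    have hζoff : off hT w j ≤ ζ := ha.trans h1.le
    have hδ' : ζ - off hT w j ≤ δ := by
      rw [← Ordinal.add_sub_cancel_of_le hζoff] at h2
      exact (add_le_add_iff_left _).mp h2
    refine ⟨ζ - off hT w j, ⟨?_, hδ'⟩,
      by rw [← FF_block hT h j (hδ'.trans hδ), Ordinal.add_sub_cancel_of_le hζoff]⟩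
    have key : off hT w j + (a - off hT w j) < off hT w j + (ζ - off hT w j) := by
      rw [Ordinal.add_sub_cancel_of_le ha, Ordinal.add_sub_cancel_of_le hζoff]
      exact h1
    exact (add_lt_add_iff_left _).mp key
  · rintro ⟨δ', ⟨h1, h2⟩, rfl⟩
    refine ⟨off hT w j + δ', ⟨?_, (add_le_add_iff_left _).mpr h2⟩,
      FF_block hT h j (h2.trans hδ)⟩
    calc a = off hT w j + (a - off hT w j) := (Ordinal.add_sub_cancel_of_le ha).symm
      _ < off hT w j + δ' := (add_lt_add_iff_left _).mpr h1

/-! ### Openness of images of intervals -/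

lemma tail_eq_coneS (hT : IsOmegaTree R) {w : T} (h0 : rho hT w ≠ 0)
    (hnl : ¬ Order.IsSuccLimit (rho hT w)) (j : ℕ) :
    ({w} ∪ ⋃ (k : ℕ) (_ : j < k), coneS R (dSeq hT w k)) = coneS R w := by
  apply subset_antisymm
  · rintro u (rfl | hu)
    · exact Or.inl rfl
    · obtain ⟨k, _, hu⟩ := Set.mem_iUnion₂.mp hu
      exact coneS_subset hT (daughter_R hT ((dSeq_good hT h0).1 k)) hu
  · rintro u (rfl | hu)
    · exact Or.inl rfl
    · obtain ⟨v, hv, hle⟩ := exists_daughter_le hT hu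
      obtain ⟨k, hk, hdk⟩ := (dSeq_good hT h0).2.2.2 hnl v hv (j + 1)
      exact Or.inr (Set.mem_iUnion₂.mpr ⟨k, by omega, by rw [hdk]; exact hle⟩)

lemma tail_mem_gens (hT : IsOmegaTree R) {w : T} (hlim : Order.IsSuccLimit (rho hT w)) (j : ℕ) :
    ({w} ∪ ⋃ (k : ℕ) (_ : j < k), coneS R (dSeq hT w k)) ∈ sigmaGens R := by
  have h0 : rho hT w ≠ 0 := hlim.pos.ne'
  have hgood := dSeq_good hT h0
  exact ⟨w, by rw [ptRank_eq_rho hT]; exact hlim, dSeq hT w, (hgood.2.2.1 hlim).1,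
    (hgood.2.2.1 hlim).2, j, rfl⟩

lemma FF_image_Ioc_top (hT : IsOmegaTree R) {w : T} (h0 : rho hT w ≠ 0) {a : Ordinal.{u}}
    (ha : a < ω ^ rho hT w) :
    FF hT w '' Set.Ioc a (ω ^ rho hT w) =
      (FF hT w '' Set.Ioc a
          (off hT w (blk hT w a) + eFun (rho hT (dSeq hT w (blk hT w a))))) ∪
        ({w} ∪ ⋃ (k : ℕ) (_ : blk hT w a < k), coneS R (dSeq hT w k)) := by
  set j := blk hT w a with hj
  apply subset_antisymm
  · rintro _ ⟨ζ, ⟨h1, h2⟩, rfl⟩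
    rcases eq_or_lt_of_le h2 with rfl | hζ
    · exact Or.inr (Or.inl (by rw [FF_top hT w (Or.inr (le_refl _))]; rfl))
    · have hk : j ≤ blk hT w ζ := blk_mono hT h0 h1.le hζ
      rcases eq_or_lt_of_le hk with hkeq | hklt
      · refine Or.inl ⟨ζ, ⟨h1, ?_⟩, rfl⟩
        have := blk_lt hT h0 hζ
        rw [← hkeq] at this
        rw [off, blkLen, ← add_assoc, Ordinal.add_one_eq_succ] at this
        exact Order.lt_succ_iff.mp this
      · refine Or.inr (Or.inr (Set.mem_iUnion₂.mpr ⟨blk hT w ζ, hklt, ?_⟩))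
        rw [FF_val hT h0 hζ]
        exact FF_mem_coneS hT _ _
  · rintro u (⟨ζ, ⟨h1, h2⟩, rfl⟩ | (hu0 | hu))
    · refine ⟨ζ, ⟨h1, h2.trans ?_⟩, rfl⟩
      refine le_of_lt (lt_of_lt_of_le ?_ (off_lt_opow hT h0 (j + 1)).le)
      rw [off, blkLen]
      exact (add_lt_add_iff_left _).mpr (by
        rw [Ordinal.add_one_eq_succ]; exact Order.lt_succ _)
    · exact ⟨ω ^ rho hT w, ⟨ha, le_refl _⟩,
        (FF_top hT w (Or.inr (le_refl _))).trans (Set.mem_singleton_iff.mp hu0).symm⟩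
    · obtain ⟨k, hjk, hu⟩ := Set.mem_iUnion₂.mp hu
      obtain ⟨δ, hδ, hFF⟩ := FF_surj hT (dSeq hT w k) u hu
      refine ⟨off hT w k + δ, ⟨?_, ?_⟩, by rw [FF_block hT h0 k hδ, hFF]⟩
      · calc a < off hT w (j + 1) := blk_lt hT h0 ha
          _ ≤ off hT w k := (off_strictMono hT w).monotone (by omega)
          _ ≤ off hT w k + δ := le_self_add
      · refine le_of_lt (lt_of_lt_of_le ?_ (off_lt_opow hT h0 (k + 1)).le)
        rw [off, blkLen]
        refine (add_lt_add_iff_left _).mpr (lt_of_le_of_lt hδ ?_)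
        rw [Ordinal.add_one_eq_succ]
        exact Order.lt_succ _

lemma isOpen_union' {X : Type u} {t : TopologicalSpace X} {A B : Set X}
    (hA : t.IsOpen A) (hB : t.IsOpen B) : t.IsOpen (A ∪ B) := by
  rw [← Set.sUnion_pair]
  refine t.isOpen_sUnion _ ?_
  rintro C (rfl | rfl)
  · exact hA
  · exact hB

lemma FF_image_Ioc_isOpen (hT : IsOmegaTree R) (w : T) :
    ∀ b, b ≤ eFun (rho hT w) → ∀ a, (sigmaTop R).IsOpen (FF hT w '' Set.Ioc a b) := by
  induction w using WellFounded.induction hT.converseWellFounded with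
  | _ w IHw =>
    intro b
    induction b using Ordinal.induction with
    | _ b IHb =>
      intro hb a
      rcases le_or_gt b a with hba | hab
      · rw [Set.Ioc_eq_empty (not_lt.mpr hba), Set.image_empty]
        exact @isOpen_empty T (sigmaTop R)
      · rcases eq_or_ne (rho hT w) 0 with h0 | h0
        · rw [h0, eFun_zero', nonpos_iff_eq_zero] at hb
          subst hb
          exact absurd hab (not_lt_zero)
        · rw [eFun_of_ne_zero h0] at hb
          rcases eq_or_lt_of_le hb with rfl | hblt
          · -- top case
            rw [FF_image_Ioc_top hT h0 hab]
            apply isOpen_union'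
            · have hoffa : off hT w (blk hT w a) ≤ a := off_blk_le hT h0 hab
              rw [FF_image_block hT h0 _ (le_refl _) hoffa]
              exact IHw _ (daughter_R hT ((dSeq_good hT h0).1 _)) _ (le_refl _) _
            · by_cases hlim : Order.IsSuccLimit (rho hT w)
              · exact isOpenS_of_gen (tail_mem_gens hT hlim _)
              · rw [tail_eq_coneS hT h0 hlim _]
                exact isOpenS_of_upOpen (isOpen_coneS hT w)
          · -- middle case : b < ω ^ θ
            set j := blk hT w b with hjdef
            have hth : off hT w j ≤ b := off_blk_le hT h0 hblt
            have hbe : b - off hT w j ≤ eFun (rho hT (dSeq hT w j)) := sub_le_blkLen hT h0 hblt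
            rcases le_or_gt (off hT w j) a with hja | haj
            · have hbeq : b = off hT w j + (b - off hT w j) :=
                (Ordinal.add_sub_cancel_of_le hth).symm
              rw [hbeq, FF_image_block hT h0 j hbe hja]
              exact IHw _ (daughter_R hT ((dSeq_good hT h0).1 _)) _ hbe _
            · rcases off_shape hT w j with hsh | ⟨γ, hsh⟩
              · rw [hsh] at haj
                exact absurd haj (not_lt_zero)
              · have haγ : a ≤ γ := by
                  rw [hsh, Ordinal.add_one_eq_succ] at haj
                  exact Order.lt_succ_iff.mp haj
                have hγoff : γ < off hT w j := by
                  rw [hsh, Ordinal.add_one_eq_succ]; exact Order.lt_succ _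
                have hγb : γ < b := lt_of_lt_of_le hγoff hth
                have hsplit : Set.Ioc a b = Set.Ioc a γ ∪ Set.Ioc γ b :=
                  (Set.Ioc_union_Ioc_eq_Ioc haγ hγb.le).symm
                rw [hsplit, Set.image_union]
                apply isOpen_union'
                · exact IHb γ hγb (by rw [eFun_of_ne_zero h0]; exact hγb.le.trans hb) a
                · have h1 : Set.Ioc γ b = insert (off hT w j) (Set.Ioc (off hT w j) b) := by
                    ext ζ
                    simp only [Set.mem_Ioc, Set.mem_insert_iff]
                    constructor
                    · rintro ⟨hγζ, hζb⟩
                      have : off hT w j ≤ ζ := by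
                        rw [hsh]
                        exact add_one_le_iff'.mpr hγζ
                      rcases eq_or_lt_of_le this with heq | hlt'
                      · exact Or.inl heq.symm
                      · exact Or.inr ⟨hlt', hζb⟩
                    · rintro (rfl | ⟨h1', h2'⟩)
                      · exact ⟨hγoff, hth⟩
                      · exact ⟨hγoff.trans h1', h2'⟩
                  rw [h1, Set.image_insert_eq, Set.insert_eq]
                  apply isOpen_union'
                  · have h2 : FF hT w (off hT w j) = FF hT (dSeq hT w j) 0 := by
                      have := FF_block hT h0 j (δ := 0) (zero_le)
                      rwa [add_zero] at this
                    rw [h2]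
                    exact isOpenS_of_upOpen
                      (isOpen_singleton_of_rank_zero hT (FF_zero_rank hT _))
                  · have hbeq : b = off hT w j + (b - off hT w j) :=
                      (Ordinal.add_sub_cancel_of_le hth).symm
                    rw [hbeq, FF_image_block hT h0 j hbe (le_refl _), Ordinal.sub_self]
                    exact IHw _ (daughter_R hT ((dSeq_good hT h0).1 _)) _ hbe _

/-! ### Continuity at limit points -/

lemma FF_cont (hT : IsOmegaTree R) (w : T) :
    ∀ ξ, ξ ≤ eFun (rho hT w) → Order.IsSuccLimit ξ →
      ∀ G, (sigmaTop R).IsOpen G → FF hT w ξ ∈ G →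
        ∃ α, α < ξ ∧ ∀ ζ, α < ζ → ζ ≤ ξ → FF hT w ζ ∈ G := by
  induction w using WellFounded.induction hT.converseWellFounded with
  | _ w IHw =>
    intro ξ hξ hlim G hG hmem
    rcases eq_or_ne (rho hT w) 0 with h0 | h0
    · rw [h0, eFun_zero', nonpos_iff_eq_zero] at hξ
      subst hξ
      exact absurd hlim.pos (lt_irrefl 0)
    · rw [eFun_of_ne_zero h0] at hξ
      rcases eq_or_lt_of_le hξ with rfl | hlt
      · -- top point
        rw [sigmaTop_eq] at hG
        have hG' : TopologicalSpace.GenerateOpen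
            ({S : Set T | @IsOpen T (upTop R) S} ∪ sigmaGens R) G := hG
        clear hG
        rw [FF_top hT w (Or.inr (le_refl _))] at hmem
        clear hξ hlim
        induction hG' with
        | basic S hS =>
            rcases hS with hS | hS
            · refine ⟨0, Ordinal.opow_pos _ Ordinal.omega0_pos, fun ζ _ _ => ?_⟩
              rcases FF_mem_coneS hT w ζ with heq | hR
              · rw [heq]; exact hmem
              · exact hS w hmem _ hR
            · obtain ⟨w'', hw''lim, v, hinj, hrange, n, rfl⟩ := hS
              rcases hmem with hw | hmem2
              · -- w = w''
                rw [Set.mem_singleton_iff] at hw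
                subst hw
                have hlimρ : Order.IsSuccLimit (rho hT w) := by
                  rw [← ptRank_eq_rho hT]; exact hw''lim
                have hgood := dSeq_good hT h0
                have hranges := (hgood.2.2.1 hlimρ)
                have hvd : ∀ i, v i ∈ daughters R w := fun i => hrange ▸ Set.mem_range_self i
                choose g hg using fun i => hgood.2.1 (v i) (hvd i)
                set m := (Finset.range (n + 1)).sup g with hm
                refine ⟨off hT w (m + 1), off_lt_opow hT h0 _, fun ζ h1 h2 => ?_⟩
                rcases eq_or_lt_of_le h2 with rfl | hζ
                · rw [FF_top hT w (Or.inr (le_refl _))]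
                  exact Or.inl rfl
                · have hk : m < blk hT w ζ := by
                    by_contra hc
                    push_neg at hc
                    have hlt2 : ζ < off hT w (m + 1) :=
                      lt_of_lt_of_le (blk_lt hT h0 hζ)
                        ((off_strictMono hT w).monotone (by omega))
                    exact absurd (h1.trans hlt2) (lt_irrefl _)
                  have hdk : dSeq hT w (blk hT w ζ) ∈ Set.range v := by
                    rw [hrange]; exact hgood.1 _
                  obtain ⟨i, hi⟩ := hdk
                  have hin : n < i := by
                    by_contra hc
                    push_neg at hc
                    have hgi : blk hT w ζ = g i := hranges.1 (by rw [hg i, hi])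
                    have : blk hT w ζ ≤ m := by
                      rw [hgi, hm]
                      exact Finset.le_sup (Finset.mem_range.mpr (by omega))
                    omega
                  refine Or.inr (Set.mem_iUnion₂.mpr ⟨i, hin, ?_⟩)
                  have hmem3 := FF_mem_coneS hT (dSeq hT w (blk hT w ζ))
                    (ζ - off hT w (blk hT w ζ))
                  rw [← FF_val hT h0 hζ] at hmem3
                  rcases hmem3 with heq | hR
                  · exact Or.inl (show FF hT w ζ = v i from heq.trans hi.symm)
                  · refine Or.inr ?_
                    show R (v i) (FF hT w ζ)
                    rw [hi]
                    exact hR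
              · -- w in a tail cone
                obtain ⟨i0, hi0, hw⟩ := Set.mem_iUnion₂.mp hmem2
                refine ⟨0, Ordinal.opow_pos _ Ordinal.omega0_pos, fun ζ _ _ => ?_⟩
                refine Or.inr (Set.mem_iUnion₂.mpr ⟨i0, hi0, ?_⟩)
                rcases hw with hw | hw
                · rw [Set.mem_singleton_iff] at hw
                  subst hw
                  rcases FF_mem_coneS hT (v i0) ζ with heq | hR
                  · rw [heq]; exact Or.inl rfl
                  · exact Or.inr hR
                · rcases FF_mem_coneS hT w ζ with heq | hR
                  · rw [heq]; exact Or.inr hw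
                  · exact Or.inr (hT.trans _ _ _ hw hR)
        | univ => exact ⟨0, Ordinal.opow_pos _ Ordinal.omega0_pos, fun ζ _ _ => trivial⟩
        | inter S1 S2 hS1 hS2 IH1 IH2 =>
            obtain ⟨m1, hm1, hs1⟩ := IH1 hmem.1
            obtain ⟨m2, hm2, hs2⟩ := IH2 hmem.2
            exact ⟨max m1 m2, max_lt hm1 hm2, fun ζ h1 h2 =>
              ⟨hs1 ζ (lt_of_le_of_lt (le_max_left _ _) h1) h2,
               hs2 ζ (lt_of_le_of_lt (le_max_right _ _) h1) h2⟩⟩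
        | sUnion S hS IH =>
            obtain ⟨s, hs, hmem'⟩ := hmem
            obtain ⟨m, hm, hsp⟩ := IH s hs hmem'
            exact ⟨m, hm, fun ζ h1 h2 => ⟨s, hs, hsp ζ h1 h2⟩⟩
      · -- interior limit point: recurse into the block
        set j := blk hT w ξ with hjdef
        have hoff : off hT w j ≤ ξ := off_blk_le hT h0 hlt
        have hsum : off hT w j + (ξ - off hT w j) = ξ := Ordinal.add_sub_cancel_of_le hoff
        have hδe : ξ - off hT w j ≤ eFun (rho hT (dSeq hT w j)) := sub_le_blkLen hT h0 hlt
        have hδlim : Order.IsSuccLimit (ξ - off hT w j) := by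
          rcases Ordinal.zero_or_succ_or_isSuccLimit (ξ - off hT w j) with hz | ⟨γ, hγ⟩ | hl
          · exfalso
            rw [hz, add_zero] at hsum
            rcases off_shape hT w j with hsh | ⟨γ, hsh⟩
            · rw [← hsum, hsh] at hlim
              exact absurd hlim.pos (lt_irrefl 0)
            · rw [← hsum, hsh, Ordinal.add_one_eq_succ] at hlim
              exact Order.not_isSuccLimit_succ γ hlim
          · exfalso
            rw [← hγ, ← Ordinal.add_one_eq_succ, ← add_assoc] at hsum
            rw [← hsum, Ordinal.add_one_eq_succ] at hlim
            exact Order.not_isSuccLimit_succ _ hlim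
          · exact hl
        have hGmem' : FF hT (dSeq hT w j) (ξ - off hT w j) ∈ G := by
          rw [← FF_val hT h0 hlt]; exact hmem
        obtain ⟨α', hα', hsp⟩ := IHw _ (daughter_R hT ((dSeq_good hT h0).1 j)) _ hδe hδlim
          G hG hGmem'
        refine ⟨off hT w j + α', by rw [← hsum]; exact (add_lt_add_iff_left _).mpr hα',
          fun ζ h1 h2 => ?_⟩
        have hζoff : off hT w j ≤ ζ := (le_self_add).trans h1.le
        have hζblk : blk hT w ζ = j :=
          blk_eq hT j hζoff (lt_of_le_of_lt h2 (blk_lt hT h0 hlt))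
        have hζlt : ζ < ω ^ rho hT w := lt_of_le_of_lt h2 hlt
        rw [FF_val hT h0 hζlt, hζblk]
        apply hsp
        · have key : off hT w j + α' < off hT w j + (ζ - off hT w j) := by
            rw [Ordinal.add_sub_cancel_of_le hζoff]; exact h1
          exact (add_lt_add_iff_left _).mp key
        · have key : off hT w j + (ζ - off hT w j) ≤ off hT w j + (ξ - off hT w j) := by
            rw [Ordinal.add_sub_cancel_of_le hζoff, hsum]; exact h2
          exact (add_le_add_iff_left _).mp key
/-- The ordinal value of a point of `Θ'.ToType`. -/
noncomputable def oval {Θ' : Ordinal.{u}} (x : Θ'.ToType) : Ordinal.{u} :=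
  @Ordinal.typein Θ'.ToType (· < ·) isWellOrder_lt x

end OmegaBouquet

open OmegaBouquet in
/-- For any ω-bouquet generated by a countable converse well-founded tree
`(T, R)` whose root `r` has rank `Θ`, there is a surjective d-map
`f : ([0, e(Θ)], I₁) → T` with `f(e(Θ)) = r`. -/
theorem exists_surjective_dMap_interval_onto_bouquet
    {T : Type u} (R : T → T → Prop) (hT : IsOmegaTree R)
    (r : T) (hr : ∀ s : T, ¬ R s r) (Θ : Ordinal.{u}) (hΘ : ptRank (upTop R) r = Θ) :
    ∃ f : (eFun Θ + 1).ToType → T,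
      Function.Surjective f ∧ IsDMap (intervalTop (eFun Θ + 1)) (sigmaTop R) f ∧
        ∀ x : (eFun Θ + 1).ToType, (∀ y, y ≤ x) → f x = r := by
  classical
  have hρr : rho hT r = Θ := by rw [← ptRank_eq_rho hT, hΘ]
  set ι : (eFun Θ + 1).ToType → Ordinal.{u} := fun x => OmegaBouquet.oval x with hι
  have hιlt : ∀ x, ι x < eFun Θ + 1 := fun x => Ordinal.typein_lt_self x
  have hmono : ∀ x y, ι x < ι y ↔ x < y := fun x y =>
    @Ordinal.typein_lt_typein (eFun Θ + 1).ToType (· < ·) isWellOrder_lt x y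
  have hιle : ∀ x, ι x ≤ eFun Θ := fun x => by
    have := hιlt x
    rwa [Ordinal.add_one_eq_succ, Order.lt_succ_iff] at this
  have hinj : ∀ x y, ι x = ι y → x = y := by
    intro x y h
    rcases lt_trichotomy x y with hl | he | hl
    · exact absurd ((hmono x y).mpr hl) (by rw [h]; exact lt_irrefl _)
    · exact he
    · exact absurd ((hmono y x).mpr hl) (by rw [h]; exact lt_irrefl _)
  have hmono_le : ∀ x y, ι x ≤ ι y ↔ x ≤ y := by
    intro x y
    constructor
    · intro h
      by_contra hc
      push_neg at hc
      exact absurd ((hmono y x).mpr hc) (not_lt.mpr h)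
    · intro h
      rcases eq_or_lt_of_le h with rfl | hl
      · exact le_refl _
      · exact ((hmono x y).mpr hl).le
  have hsurj : ∀ o : Ordinal.{u}, o < eFun Θ + 1 → ∃ x, ι x = o := by
    intro o ho
    have := @Ordinal.typein_surj (eFun Θ + 1).ToType (· < ·) isWellOrder_lt o
      (by rw [Ordinal.type_toType]; exact ho)
    obtain ⟨x, hx⟩ := this
    exact ⟨x, hx⟩
  set f : (eFun Θ + 1).ToType → T := fun x => FF hT r (ι x) with hf
  have himg_Ioc : ∀ a b : (eFun Θ + 1).ToType,
      f '' Set.Ioc a b = FF hT r '' Set.Ioc (ι a) (ι b) := by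
    intro a b
    ext u
    constructor
    · rintro ⟨x, ⟨h1, h2⟩, rfl⟩
      exact ⟨ι x, ⟨(hmono a x).mpr h1, (hmono_le x b).mpr h2⟩, rfl⟩
    · rintro ⟨o, ⟨h1, h2⟩, rfl⟩
      obtain ⟨x, rfl⟩ := hsurj o (lt_of_le_of_lt h2 (hιlt b))
      exact ⟨x, ⟨(hmono a x).mp h1, (hmono_le x b).mp h2⟩, rfl⟩
  have himg_Iic : ∀ b : (eFun Θ + 1).ToType,
      f '' Set.Iic b = {FF hT r 0} ∪ FF hT r '' Set.Ioc 0 (ι b) := by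
    intro b
    ext u
    constructor
    · rintro ⟨x, hx, rfl⟩
      rcases eq_or_ne (ι x) 0 with h0 | h0
      · exact Or.inl (by rw [hf]; show FF hT r (ι x) = FF hT r 0; rw [h0])
      · exact Or.inr ⟨ι x, ⟨pos_iff_ne_zero.mpr h0, (hmono_le x b).mpr hx⟩, rfl⟩
    · rintro (hu | ⟨o, ⟨h1, h2⟩, rfl⟩)
      · obtain ⟨x, hx⟩ := hsurj 0 (lt_of_le_of_lt (zero_le)
          (by rw [Ordinal.add_one_eq_succ]; exact Order.lt_succ _))
        refine ⟨x, (hmono_le x b).mp (by rw [hx]; exact zero_le), ?_⟩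
        rw [Set.mem_singleton_iff] at hu
        rw [hu, hf]
        show FF hT r (ι x) = FF hT r 0
        rw [hx]
      · obtain ⟨x, rfl⟩ := hsurj o (lt_of_le_of_lt h2 (hιlt b))
        exact ⟨x, (hmono_le x b).mp h2, rfl⟩
  have hrtop : ∀ x, ι x = eFun Θ → f x = r := by
    intro x hx
    rw [hf]
    show FF hT r (ι x) = r
    rw [hx, ← hρr, FF_eFun]
  obtain ⟨mx, hmx⟩ := hsurj (eFun Θ)
    (by rw [Ordinal.add_one_eq_succ]; exact Order.lt_succ _)
  have hmxtop : ∀ z, z ≤ mx := fun z => (hmono_le z mx).mp (by rw [hmx]; exact hιle z)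
  refine ⟨f, ?_, ⟨?_, ?_, ?_⟩, ?_⟩
  · -- surjectivity
    intro u
    have hu : u ∈ coneS R r := by rw [coneS_root hT hr]; trivial
    obtain ⟨ξ, hξ, hFF⟩ := FF_surj hT r u hu
    obtain ⟨x, hx⟩ := hsurj ξ (lt_of_le_of_lt (hρr ▸ hξ)
      (by rw [Ordinal.add_one_eq_succ]; exact Order.lt_succ _))
    exact ⟨x, by rw [hf]; show FF hT r (ι x) = u; rw [hx, hFF]⟩
  · -- continuity
    rw [continuous_def]
    intro G hG
    apply isOpen_of_pointwise
    intro x hx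
    rcases Ordinal.zero_or_succ_or_isSuccLimit (ι x) with h0 | ⟨γ, hγ⟩ | hl
    · refine ⟨Set.Iic x, intervalBasic_isOpen (Or.inl ⟨x, rfl⟩), Set.mem_Iic.mpr (le_refl x), ?_⟩
      intro z hz
      have : ι z = ι x := by
        rw [h0]
        have := (hmono_le z x).mpr hz
        rw [h0] at this
        exact nonpos_iff_eq_zero.mp this
      rwa [show z = x from hinj z x this]
    · rw [← Ordinal.add_one_eq_succ, eq_comm] at hγ
      obtain ⟨y, hy⟩ := hsurj γ (lt_trans (show γ < ι x by
        rw [hγ, Ordinal.add_one_eq_succ]; exact Order.lt_succ γ) (hιlt x))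
      refine ⟨Set.Ioc y x, intervalBasic_isOpen (Or.inr ⟨y, x, rfl⟩), Set.mem_Ioc.mpr ⟨?_, le_refl x⟩, ?_⟩
      · exact (hmono y x).mp (by rw [hy, hγ, Ordinal.add_one_eq_succ]; exact Order.lt_succ γ)
      · intro z ⟨hz1, hz2⟩
        have h1 : γ < ι z := by rw [← hy]; exact (hmono y z).mpr hz1
        have h2 : ι z ≤ γ + 1 := by rw [← hγ]; exact (hmono_le z x).mpr hz2
        have : ι z = ι x := by rw [hγ]; exact le_antisymm h2 (add_one_le_iff'.mpr h1)
        rwa [show z = x from hinj z x this]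
    · obtain ⟨α, hα, hsp⟩ := FF_cont hT r (ι x) (hρr ▸ hιle x) hl G hG hx
      obtain ⟨y, hy⟩ := hsurj α (lt_trans hα (hιlt x))
      refine ⟨Set.Ioc y x, intervalBasic_isOpen (Or.inr ⟨y, x, rfl⟩),
        Set.mem_Ioc.mpr ⟨(hmono y x).mp (by rw [hy]; exact hα), le_refl x⟩, ?_⟩
      intro z ⟨hz1, hz2⟩
      exact hsp (ι z) (by rw [← hy]; exact (hmono y z).mpr hz1) ((hmono_le z x).mpr hz2)
  · -- openness
    intro O hO
    apply isOpen_of_pointwise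
    rintro _ ⟨x, hxO, rfl⟩
    obtain ⟨B, hB, hxB, hBO⟩ := intervalTop_pointwise mx hmxtop hO x hxO
    refine ⟨f '' B, ?_, ⟨x, hxB, rfl⟩, Set.image_mono hBO⟩
    rcases hB with ⟨b, rfl⟩ | ⟨a, b, rfl⟩
    · rw [himg_Iic]
      exact isOpen_union'
        (isOpenS_of_upOpen (isOpen_singleton_of_rank_zero hT (FF_zero_rank hT r)))
        (FF_image_Ioc_isOpen hT r (ι b) (hρr ▸ hιle b) 0)
    · rw [himg_Ioc]
      exact FF_image_Ioc_isOpen hT r (ι b) (hρr ▸ hιle b) (ι a)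
  · -- pointwise discreteness
    rintro y x rfl
    obtain ⟨c, hcle, hcsh, hcspec⟩ := FF_span hT r (ι x) (hρr ▸ hιle x)
    rcases hcsh with rfl | ⟨γ, rfl⟩
    · refine ⟨Set.Iic x, intervalBasic_isOpen (Or.inl ⟨x, rfl⟩), Set.mem_Iic.mpr (le_refl x), ?_⟩
      intro z hz hfz
      rcases eq_or_lt_of_le ((hmono_le z x).mpr hz) with heq | hlt
      · exact hinj z x heq
      · exact absurd hfz (hcspec (ι z) (zero_le) hlt)
    · obtain ⟨y', hy'⟩ := hsurj γ (lt_of_lt_of_le (lt_of_lt_of_le (by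
        rw [Ordinal.add_one_eq_succ]; exact Order.lt_succ γ) hcle) (hιlt x).le)
      refine ⟨Set.Ioc y' x, intervalBasic_isOpen (Or.inr ⟨y', x, rfl⟩), Set.mem_Ioc.mpr ⟨?_, le_refl x⟩, ?_⟩
      · refine (hmono y' x).mp ?_
        rw [hy']
        exact lt_of_lt_of_le (by rw [Ordinal.add_one_eq_succ]; exact Order.lt_succ γ) hcle
      · intro z ⟨hz1, hz2⟩ hfz
        rcases eq_or_lt_of_le ((hmono_le z x).mpr hz2) with heq | hlt
        · exact hinj z x heq
        · refine absurd hfz (hcspec (ι z) ?_ hlt)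
          refine add_one_le_iff'.mpr ?_
          rw [← hy']
          exact (hmono y' z).mpr hz1
  · -- the top point maps to the root
    intro x hx
    refine hrtop x (le_antisymm (hιle x) ?_)
    rw [← hmx]
    exact (hmono_le mx x).mpr (hx mx)
end
end

section
/- Löb's axiom ◻(◻p → p) → ◻p is valid in a topological space X under the d-semantics if and only if X is scattered. -/
open Ordinal Set

noncomputable section

universe u

/-- In a scattered space, `dB ⊆ d(B ∖ dB)`. -/
lemma scattered_dSet_sub {X : Type u} {t : TopologicalSpace X} (hs : IsScattered t)
    (B : Set X) : dSet t B ⊆ dSet t ((dSet t B)ᶜ ∩ B) := by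
  intro x hx U hU hxU
  obtain ⟨z, hz, _⟩ := hx U hU hxU
  obtain ⟨y, hy, W, hW, hWeq⟩ := hs (U ∩ B) ⟨z, hz⟩
  have hyW : y ∈ W ∩ (U ∩ B) := hWeq ▸ rfl
  have hynd : y ∉ dSet t B := by
    intro hyd
    obtain ⟨w, hw, hwne⟩ := hyd (W ∩ U) (t.isOpen_inter W U hW hU) ⟨hyW.1, hyW.2.1⟩
    exact hwne (Set.eq_of_mem_singleton (hWeq ▸ ⟨hw.1.1, hw.1.2, hw.2⟩))
  have hyx : y ≠ x := by
    rintro rfl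
    obtain ⟨w, hw, hwne⟩ := hx (W ∩ U) (t.isOpen_inter W U hW hU) ⟨hyW.1, hyW.2.1⟩
    exact hwne (Set.eq_of_mem_singleton (hWeq ▸ ⟨hw.1.1, hw.1.2, hw.2⟩))
  exact ⟨y, ⟨hy.1, hynd, hy.2⟩, hyx⟩

/-- Löb's axiom `◻(◻p → p) → ◻p` is valid in a topological space under the
d-semantics if and only if the space is scattered. -/
theorem lob_valid_iff_scattered {X : Type u} (t : TopologicalSpace X) :
    ValidIn t (((((Fml.var 0).box.imp (Fml.var 0)).box).imp (Fml.var 0).box)) ↔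
      IsScattered t := by
  constructor
  · intro h A hA
    by_contra hno
    push_neg at hno
    have hsub : A ⊆ dSet t A := by
      intro x hx U hU hxU
      by_contra hc
      push_neg at hc
      refine hno x hx U hU ?_
      apply Set.Subset.antisymm
      · intro y hy
        exact hc y hy
      · intro y hy
        rw [Set.mem_singleton_iff] at hy
        exact hy ▸ ⟨hxU, hx⟩
    obtain ⟨x, hxA⟩ := hA
    have hval := h (fun _ => Aᶜ)
    have hx : x ∈ fval t (fun _ => Aᶜ)
        (((((Fml.var 0).box.imp (Fml.var 0)).box).imp (Fml.var 0).box)) := by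
      rw [hval]; trivial
    simp only [fval, compl_compl, Set.compl_union, Set.mem_union, Set.mem_compl_iff,
      Set.mem_inter_iff, not_not] at hx
    rcases hx with hx | hx
    · obtain ⟨y, hy, _⟩ := hx Set.univ t.isOpen_univ trivial
      exact hy.2.1 (hsub hy.2.2)
    · exact hx (hsub hxA)
  · intro hs V
    ext x
    simp only [fval, compl_compl, Set.compl_union, Set.mem_union, Set.mem_compl_iff,
      Set.mem_inter_iff, not_not, Set.mem_univ, iff_true]
    by_cases hx : x ∈ dSet t (V 0)ᶜ
    · exact Or.inl (scattered_dSet_sub hs (V 0)ᶜ hx)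
    · exact Or.inr hx

end
end

section
/- If f : X → Y is a d-map between scattered spaces, then the rank functions satisfy ρ_X = ρ_Y ∘ f, i.e., ρ_X(x) = ρ_Y(f(x)) for every x ∈ X. -/
open Ordinal Set

noncomputable section

universe u

lemma dIter_zero' {X : Type u} (t : TopologicalSpace X) : dIter t 0 = Set.univ :=
  Ordinal.limitRecOn_zero _ _ _

lemma dIter_succ' {X : Type u} (t : TopologicalSpace X) (o : Ordinal.{u}) :
    dIter t (Order.succ o) = dSet t (dIter t o) :=
  Ordinal.limitRecOn_succ _ _ _ _

lemma dIter_limit' {X : Type u} (t : TopologicalSpace X) {o : Ordinal.{u}} (ho : Order.IsSuccLimit o) :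
    dIter t o = ⋂ (o' : Ordinal.{u}) (_ : o' < o), dIter t o' :=
  Ordinal.limitRecOn_limit _ _ _ _ ho

lemma dMap_mem_dIter_iff {X Y : Type u} (t : TopologicalSpace X) (s : TopologicalSpace Y)
    (f : X → Y) (hf : IsDMap t s f) :
    ∀ ξ : Ordinal.{u}, ∀ x : X, x ∈ dIter t ξ ↔ f x ∈ dIter s ξ := by
  obtain ⟨hc, ho, hd⟩ := hf
  intro ξ
  induction ξ using Ordinal.limitRecOn with
  | zero => simp [dIter_zero']
  | add_one o ih =>
    intro x
    rw [← Order.succ_eq_add_one]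
    rw [dIter_succ', dIter_succ']
    obtain ⟨U₀, hU₀open, hxU₀, hU₀⟩ := hd (f x) x rfl
    constructor
    · -- x is a limit of dIter t o ⇒ f x is a limit of dIter s o
      intro hx V hVopen hfxV
      obtain ⟨z, ⟨hz1, hz2⟩, hz3⟩ := hx (f ⁻¹' V ∩ U₀)
        (t.isOpen_inter _ _ (hc.isOpen_preimage V hVopen) hU₀open) ⟨hfxV, hxU₀⟩
      refine ⟨f z, ⟨hz1.1, (ih z).1 hz2⟩, fun h => hz3 (hU₀ z hz1.2 h)⟩
    · -- f x is a limit of dIter s o ⇒ x is a limit of dIter t o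
      intro hfx U hUopen hxU
      have hW : t.IsOpen (U ∩ U₀) := t.isOpen_inter _ _ hUopen hU₀open
      have hfW : s.IsOpen (f '' (U ∩ U₀)) := ho _ hW
      obtain ⟨y, ⟨hy1, hy2⟩, hy3⟩ := hfx (f '' (U ∩ U₀)) hfW ⟨x, ⟨hxU, hxU₀⟩, rfl⟩
      obtain ⟨z, hzW, hfz⟩ := hy1
      refine ⟨z, ⟨hzW.1, (ih z).2 (hfz ▸ hy2)⟩, ?_⟩
      rintro rfl
      exact hy3 hfz.symm
  | limit o ho ih =>
    intro x
    rw [dIter_limit' t ho, dIter_limit' s ho]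
    simp only [Set.mem_iInter]
    exact ⟨fun h o' h' => (ih o' h' x).1 (h o' h'),
           fun h o' h' => (ih o' h' x).2 (h o' h')⟩

/-- A d-map between scattered spaces preserves ranks:
`ρ_X(x) = ρ_Y(f(x))` for every `x`. -/
theorem dMap_preserves_rank {X Y : Type u} (t : TopologicalSpace X) (s : TopologicalSpace Y)
    (hX : IsScattered t) (hY : IsScattered s) (f : X → Y) (hf : IsDMap t s f) :
    ∀ x : X, ptRank t x = ptRank s (f x) := by
  intro x
  unfold ptRank
  congr 1
  ext ξ
  simp only [Set.mem_setOf_eq]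
  rw [dMap_mem_dIter_iff t s f hf (ξ + 1) x]

end
end
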